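/- For every nonnegative integer i and r, the Bernoulli polynomial evaluated at r satisfies B_i(r) = Σ_{k=0}^{i} (-1)^k (k!/(k+1)) {i+r, k+r}_r, where {n,m}_r denotes the r-Stirling number of the second kind. -/

import Mathlib

open Finset

/-- The `r`-Stirling numbers of the second kind: `rS2 r i j = {i+r, j+r}_r`,
with generating function `∑_i {i+r, j+r}_r t^i/i! = (1/j!) e^{rt}(e^t-1)^j`. -/
def rS2 (r : ℕ) : ℕ → ℕ → ℕ
  | 0, 0 => 1
  | 0, _ + 1 => 0
  | i + 1, 0 => r * rS2 r i 0
  | i + 1, j + 1 => (j + 1 + r) * rS2 r i (j + 1) + rS2 r i j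

lemma rS2_zero_right (r : ℕ) : ∀ i, rS2 r i 0 = r ^ i := by
  intro i
  induction i with
  | zero => rfl
  | succ n ih => show r * rS2 r n 0 = _; rw [ih, pow_succ]; ring

lemma rS2_eq_zero (r : ℕ) : ∀ i k, i < k → rS2 r i k = 0 := by
  intro i
  induction i with
  | zero => intro k hk; match k, hk with | j+1, _ => rfl
  | succ n ih =>
    intro k hk
    match k, hk with
    | j+1, hk =>
      show (j + 1 + r) * rS2 r n (j + 1) + rS2 r n j = 0
      rw [ih j (by omega), ih (j+1) (by omega)]; ring

lemma rS2_succ_left (r : ℕ) : ∀ n k, rS2 (r+1) n k = (k+1) * rS2 r n (k+1) + rS2 r n k := by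
  intro n
  induction n with
  | zero => intro k; cases k <;> rfl
  | succ n ih =>
    intro k
    cases k with
    | zero =>
      show (r+1) * rS2 (r+1) n 0 = 1 * ((0 + 1 + r) * rS2 r n 1 + rS2 r n 0) + r * rS2 r n 0
      rw [ih 0]; ring
    | succ j =>
      show (j + 1 + (r+1)) * rS2 (r+1) n (j+1) + rS2 (r+1) n j
        = (j+2) * ((j + 1 + 1 + r) * rS2 r n (j + 2) + rS2 r n (j+1)) + ((j + 1 + r) * rS2 r n (j + 1) + rS2 r n j)
      rw [ih (j+1), ih j]; ring

lemma rS2_binom (r : ℕ) : ∀ n, ∀ k, ∑ j ∈ range (n+1), n.choose j * rS2 r j k = rS2 (r+1) n k := by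
  intro n
  induction n with
  | zero => intro k; rw [Finset.sum_range_one]; simp only [Nat.choose_self, one_mul]; cases k <;> rfl
  | succ n ih =>
    intro k
    rw [Finset.sum_range_succ']
    have h1 : ∀ j ∈ range (n+1), (n+1).choose (j+1) * rS2 r (j+1) k
        = n.choose j * rS2 r (j+1) k + n.choose (j+1) * rS2 r (j+1) k := by
      intro j _; rw [Nat.choose_succ_succ, add_mul]
    rw [Finset.sum_congr rfl h1, Finset.sum_add_distrib, add_assoc]
    have h2 : ∑ j ∈ range (n+1), n.choose (j+1) * rS2 r (j+1) k + (n+1).choose 0 * rS2 r 0 k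
        = rS2 (r+1) n k := by
      have e1 := Finset.sum_range_succ' (fun j => n.choose j * rS2 r j k) (n+1)
      have e2 := Finset.sum_range_succ (fun j => n.choose j * rS2 r j k) (n+1)
      simp only [Nat.choose_succ_self, zero_mul, add_zero] at e2
      simp only [Nat.choose_zero_right, one_mul] at e1 ⊢
      rw [e2] at e1
      rw [← e1, ih]
    rw [h2]
    cases k with
    | zero =>
      have h3 : ∀ j ∈ range (n+1), n.choose j * rS2 r (j+1) 0 = r * (n.choose j * rS2 r j 0) := by
        intro j _; show n.choose j * (r * rS2 r j 0) = _; ring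
      rw [Finset.sum_congr rfl h3, ← Finset.mul_sum, ih]
      show _ = (r+1) * rS2 (r+1) n 0
      ring
    | succ m =>
      have h3 : ∀ j ∈ range (n+1), n.choose j * rS2 r (j+1) (m+1)
          = (m + 1 + r) * (n.choose j * rS2 r j (m+1)) + n.choose j * rS2 r j m := by
        intro j _
        show n.choose j * ((m + 1 + r) * rS2 r j (m + 1) + rS2 r j m) = _
        ring
      rw [Finset.sum_congr rfl h3, Finset.sum_add_distrib, ← Finset.mul_sum, ih, ih]
      show _ = (m + 1 + (r+1)) * rS2 (r+1) n (m+1) + rS2 (r+1) n m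
      ring

lemma rS2_alt_sum (r : ℕ) : ∀ n, ∑ k ∈ range (n+1),
    (-1:ℚ)^k * (Nat.factorial k) * (rS2 r (n+1) (k+1) : ℚ) = (n+1) * (r:ℚ)^n := by
  intro n
  induction n with
  | zero =>
    simp only [range_one, sum_singleton, pow_zero, Nat.factorial_zero, Nat.cast_one]
    have : rS2 r 1 1 = 1 := by
      show (0 + 1 + r) * rS2 r 0 1 + rS2 r 0 0 = 1
      show (0 + 1 + r) * 0 + 1 = 1
      ring
    rw [show (0:ℕ)+1 = 1 from rfl, Finset.sum_range_one, this]; norm_num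
  | succ n ih =>
    set A : ℕ → ℚ := fun k => (-1:ℚ)^k * (Nat.factorial k) * (rS2 r (n+1) k : ℚ) with hA
    have hz : (rS2 r (n+1) (n+2) : ℚ) = 0 := by rw [rS2_eq_zero r (n+1) (n+2) (by omega)]; simp
    have step : ∀ k ∈ range (n+2), (-1:ℚ)^k * (Nat.factorial k) * (rS2 r (n+2) (k+1) : ℚ)
        = -(A (k+1)) + (r:ℚ) * ((-1:ℚ)^k * (Nat.factorial k) * (rS2 r (n+1) (k+1) : ℚ)) + A k := by
      intro k _
      have : (rS2 r (n+2) (k+1) : ℚ) = ((k:ℚ)+1+r) * (rS2 r (n+1) (k+1) : ℚ) + (rS2 r (n+1) k : ℚ) := by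
        show (((k + 1 + r) * rS2 r (n+1) (k + 1) + rS2 r (n+1) k : ℕ) : ℚ) = _
        push_cast; ring
      rw [this, hA]
      simp only [Nat.factorial_succ]
      push_cast
      ring
    rw [Finset.sum_congr rfl step, Finset.sum_add_distrib, Finset.sum_add_distrib]
    have s1 : ∑ k ∈ range (n+2), -(A (k+1)) = -(∑ k ∈ range (n+2), A k) + A 0 := by
      rw [Finset.sum_neg_distrib]
      have e1 := Finset.sum_range_succ' A (n+2)
      have e2 := Finset.sum_range_succ A (n+2)
      have : A (n+2) = 0 := by rw [hA]; simp only; rw [hz]; ring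
      rw [this, add_zero] at e2
      rw [e2] at e1
      linarith [e1]
    have s2 : ∑ k ∈ range (n+2), (r:ℚ) * ((-1:ℚ)^k * (Nat.factorial k) * (rS2 r (n+1) (k+1) : ℚ))
        = (r:ℚ) * ((n+1) * (r:ℚ)^n) := by
      rw [← Finset.mul_sum, Finset.sum_range_succ, hz]
      rw [← ih]; ring
    rw [s1, s2]
    have hA0 : A 0 = (r:ℚ)^(n+1) := by rw [hA]; simp [rS2_zero_right r (n+1)]
    rw [hA0]
    push_cast
    ring

lemma rS2_g_sum (r n : ℕ) :
    ∑ j ∈ range (n+1), ((n+1).choose j : ℚ) *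
      (∑ k ∈ range (j+1), (-1:ℚ)^k * (Nat.factorial k : ℚ) / ((k:ℚ)+1) * (rS2 r j k : ℚ))
    = (n+1) * (r:ℚ)^n := by
  have hext : ∀ j ∈ range (n+1),
      ((n+1).choose j : ℚ) * (∑ k ∈ range (j+1), (-1:ℚ)^k * (Nat.factorial k : ℚ) / ((k:ℚ)+1) * (rS2 r j k : ℚ))
      = ∑ k ∈ range (n+2), ((n+1).choose j : ℚ) * ((-1:ℚ)^k * (Nat.factorial k : ℚ) / ((k:ℚ)+1) * (rS2 r j k : ℚ)) := by
    intro j hj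
    rw [Finset.mem_range] at hj
    rw [← Finset.mul_sum]
    congr 1
    apply Finset.sum_subset
    · intro x hx; rw [Finset.mem_range] at *; omega
    · intro x _ hx
      rw [Finset.mem_range, not_lt] at hx
      rw [rS2_eq_zero r j x (by omega)]
      simp
  rw [Finset.sum_congr rfl hext, Finset.sum_comm]
  have hb : ∀ k, (∑ j ∈ range (n+1), ((n+1).choose j : ℚ) * (rS2 r j k : ℚ))
      = ((k:ℚ)+1) * (rS2 r (n+1) (k+1) : ℚ) := by
    intro k
    have h0 := rS2_binom r (n+1) k
    have h1 : (∑ j ∈ range (n+2), ((n+1).choose j : ℚ) * (rS2 r j k : ℚ))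
        = (rS2 (r+1) (n+1) k : ℚ) := by
      rw [← h0]; push_cast; rfl
    have h2 := Finset.sum_range_succ (fun j => ((n+1).choose j : ℚ) * (rS2 r j k : ℚ)) (n+1)
    simp only [Nat.choose_self, Nat.cast_one, one_mul] at h2
    have hd := rS2_succ_left r (n+1) k
    have hd' : (rS2 (r+1) (n+1) k : ℚ) = ((k:ℚ)+1) * (rS2 r (n+1) (k+1) : ℚ) + (rS2 r (n+1) k : ℚ) := by
      rw [hd]; push_cast; ring
    rw [h2, hd'] at h1
    linarith [h1]
  have hterm : ∀ k ∈ range (n+2),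
      (∑ j ∈ range (n+1), ((n+1).choose j : ℚ) * ((-1:ℚ)^k * (Nat.factorial k : ℚ) / ((k:ℚ)+1) * (rS2 r j k : ℚ)))
      = (-1:ℚ)^k * (Nat.factorial k : ℚ) * (rS2 r (n+1) (k+1) : ℚ) := by
    intro k _
    have hk1 : ((k:ℚ)+1) ≠ 0 := by positivity
    calc (∑ j ∈ range (n+1), ((n+1).choose j : ℚ) * ((-1:ℚ)^k * (Nat.factorial k : ℚ) / ((k:ℚ)+1) * (rS2 r j k : ℚ)))
        = (-1:ℚ)^k * (Nat.factorial k : ℚ) / ((k:ℚ)+1) * ∑ j ∈ range (n+1), ((n+1).choose j : ℚ) * (rS2 r j k : ℚ) := by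
          rw [Finset.mul_sum]; apply Finset.sum_congr rfl; intro j _; ring
      _ = (-1:ℚ)^k * (Nat.factorial k : ℚ) / ((k:ℚ)+1) * (((k:ℚ)+1) * (rS2 r (n+1) (k+1) : ℚ)) := by rw [hb k]
      _ = (-1:ℚ)^k * (Nat.factorial k : ℚ) * (rS2 r (n+1) (k+1) : ℚ) := by field_simp
  rw [Finset.sum_congr rfl hterm, Finset.sum_range_succ]
  rw [rS2_eq_zero r (n+1) (n+2) (by omega)]
  push_cast
  rw [mul_zero, add_zero]
  exact rS2_alt_sum r n

theorem bernoulli_eval_eq_rStirling_sum (i r : ℕ) :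
    (Polynomial.bernoulli i).eval (r : ℚ) =
      ∑ k ∈ Finset.range (i + 1),
        (-1) ^ k * (Nat.factorial k : ℚ) / ((k : ℚ) + 1) * (rS2 r i k : ℚ) := by
  induction i using Nat.strong_induction_on with
  | _ n ih =>
    have hsum := Polynomial.sum_bernoulli n
    have heval : ∑ j ∈ range (n+1), ((n+1).choose j : ℚ) * (Polynomial.bernoulli j).eval (r:ℚ)
        = (n+1) * (r:ℚ)^n := by
      have h := congrArg (Polynomial.eval (r:ℚ)) hsum
      rw [Polynomial.eval_finset_sum, Polynomial.eval_monomial] at h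
      simp only [Polynomial.eval_smul, smul_eq_mul] at h
      exact h
    have hE := rS2_g_sum r n
    rw [Finset.sum_range_succ] at heval hE
    have hCB : ∑ j ∈ range n, ((n+1).choose j : ℚ) * (Polynomial.bernoulli j).eval (r:ℚ)
        = ∑ j ∈ range n, ((n+1).choose j : ℚ) *
            (∑ k ∈ range (j+1), (-1:ℚ)^k * (Nat.factorial k : ℚ) / ((k:ℚ)+1) * (rS2 r j k : ℚ)) := by
      apply Finset.sum_congr rfl
      intro j hj
      rw [Finset.mem_range] at hj
      rw [ih j hj]
    rw [hCB] at heval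
    have hc : ((n+1).choose n : ℚ) = (n:ℚ) + 1 := by
      rw [Nat.choose_succ_self_right]; push_cast; ring
    rw [hc] at heval hE
    have hne : ((n:ℚ)+1) ≠ 0 := by positivity
    have h2 : ((n:ℚ)+1) * ((Polynomial.bernoulli n).eval (r:ℚ))
        = ((n:ℚ)+1) * ∑ k ∈ range (n+1), (-1:ℚ)^k * (Nat.factorial k : ℚ) / ((k:ℚ)+1) * (rS2 r n k : ℚ) := by
      linarith [heval, hE]
    exact mul_left_cancel₀ hne h2
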